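/- Let y_i = Σ_j W_{ij}·ReLU(x_j) where {W_{ij}}_j and {x_j}_j are mutually independent, E[W_{ij}] = 0, each x_j is symmetric about 0 with E[x_j²] = v, and Var(W_{ij}) = σ² for all j. Then Var(y_i) = (1/2)·d·σ²·v, where d is the number of input units. -/

import Mathlib

open MeasureTheory ProbabilityTheory

lemma variance_congr_ae' {Ω : Type*} [MeasurableSpace Ω] {μ : Measure Ω} {f g : Ω → ℝ}
    (h : f =ᵐ[μ] g) : variance f μ = variance g μ := by
  have hi : (∫ ω, f ω ∂μ) = ∫ ω, g ω ∂μ := integral_congr_ae h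
  unfold ProbabilityTheory.variance ProbabilityTheory.evariance
  have he : (fun ω => (‖f ω - μ[f]‖ₑ) ^ 2) =ᵐ[μ]
      fun ω => (‖g ω - μ[g]‖ₑ) ^ 2 := by
    filter_upwards [h] with ω hω
    simp only [hω, hi]
  rw [lintegral_congr_ae he]

lemma iIndepFun_congr_ae' {ι : Type*} {Ω : Type*} [MeasurableSpace Ω] {μ : Measure Ω}
    {β : ι → Type*} [m : ∀ i, MeasurableSpace (β i)] {f g : ∀ i, Ω → β i}
    (h : iIndepFun f μ) (hfg : ∀ i, f i =ᵐ[μ] g i) : iIndepFun g μ := by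
  rw [iIndepFun_iff_measure_inter_preimage_eq_mul] at h ⊢
  intro S sets hsets
  have hall : ∀ᵐ ω ∂μ, ∀ i ∈ S, f i ω = g i ω :=
    (Filter.eventually_all_finset S).2 fun i _ => hfg i
  have h1 : μ (⋂ i ∈ S, f i ⁻¹' sets i) = μ (⋂ i ∈ S, g i ⁻¹' sets i) := by
    apply measure_congr
    filter_upwards [hall] with ω hω
    have hiff : (ω ∈ ⋂ i ∈ S, f i ⁻¹' sets i) ↔ (ω ∈ ⋂ i ∈ S, g i ⁻¹' sets i) := by
      simp only [Set.mem_iInter, Set.mem_preimage]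
      exact forall_congr' fun i => forall_congr' fun hi => by rw [hω i hi]
    exact eq_iff_iff.2 hiff
  have h2 : ∀ i ∈ S, μ (f i ⁻¹' sets i) = μ (g i ⁻¹' sets i) := by
    intro i hi
    apply measure_congr
    filter_upwards [hfg i] with ω hω
    have hiff : (ω ∈ f i ⁻¹' sets i) ↔ (ω ∈ g i ⁻¹' sets i) := by
      simp only [Set.mem_preimage]
      rw [hω]
    exact eq_iff_iff.2 hiff
  rw [← h1, h S hsets]
  exact Finset.prod_congr rfl h2

lemma relu_sq_add_relu_neg_sq (a : ℝ) : max a 0 ^ 2 + max (-a) 0 ^ 2 = a ^ 2 := by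
  rcases le_total a 0 with h | h
  · rw [max_eq_right h, max_eq_left (neg_nonneg.2 h)]; ring
  · rw [max_eq_left h, max_eq_right (neg_nonpos.2 h)]; ring

lemma abs_max_zero_le (a : ℝ) : |max a 0| ≤ |a| := by
  rcases le_total a 0 with h | h
  · rw [max_eq_right h]; simp [abs_nonneg]
  · rw [max_eq_left h]

/-- For `y_i = Σ_j W_{ij}·ReLU(x_j)` with all `2d` variables mutually independent,
`E[W_{ij}] = 0`, `Var(W_{ij}) = σ²`, each `x_j` symmetric about 0 with `E[x_j²] = v`,
we have `Var(y_i) = (1/2)·d·σ²·v`. -/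
theorem stmt_6 {Ω : Type*} [MeasurableSpace Ω] (μ : Measure Ω) [IsProbabilityMeasure μ]
    (d : ℕ) (W x : Fin d → Ω → ℝ) (σ2 v : ℝ)
    (hW : ∀ j, MemLp (W j) 2 μ) (hx : ∀ j, MemLp (x j) 2 μ)
    (hind : iIndepFun (Sum.elim W x) μ)
    (hEW : ∀ j, ∫ ω, W j ω ∂μ = 0)
    (hVW : ∀ j, variance (W j) μ = σ2)
    (hsym : ∀ j, Measure.map (x j) μ = Measure.map (fun ω => -x j ω) μ)
    (hM2 : ∀ j, ∫ ω, (x j ω) ^ 2 ∂μ = v) :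
    variance (fun ω => ∑ j, W j ω * max (x j ω) 0) μ = (1 / 2) * d * σ2 * v := by
  classical
  -- measurable modifications
  set W' : Fin d → Ω → ℝ := fun j => (hW j).aestronglyMeasurable.mk (W j) with hW'def
  set x' : Fin d → Ω → ℝ := fun j => (hx j).aestronglyMeasurable.mk (x j) with hx'def
  have hWm : ∀ j, Measurable (W' j) :=
    fun j => (hW j).aestronglyMeasurable.stronglyMeasurable_mk.measurable
  have hxm : ∀ j, Measurable (x' j) :=
    fun j => (hx j).aestronglyMeasurable.stronglyMeasurable_mk.measurable
  have hWe : ∀ j, W j =ᵐ[μ] W' j := fun j => (hW j).aestronglyMeasurable.ae_eq_mk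
  have hxe : ∀ j, x j =ᵐ[μ] x' j := fun j => (hx j).aestronglyMeasurable.ae_eq_mk
  have hW2 : ∀ j, MemLp (W' j) 2 μ := fun j => (hW j).ae_eq (hWe j)
  have hx2 : ∀ j, MemLp (x' j) 2 μ := fun j => (hx j).ae_eq (hxe j)
  have hind' : iIndepFun (Sum.elim W' x') μ := by
    refine iIndepFun_congr_ae' hind fun i => ?_
    cases i with
    | inl j => exact hWe j
    | inr j => exact hxe j
  have hEW' : ∀ j, ∫ ω, W' j ω ∂μ = 0 := fun j => by
    rw [← integral_congr_ae (hWe j)]; exact hEW j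
  have hVW' : ∀ j, variance (W' j) μ = σ2 := fun j => by
    rw [← variance_congr_ae' (hWe j)]; exact hVW j
  have hxneg : ∀ j, (fun ω => -x j ω) =ᵐ[μ] fun ω => -x' j ω :=
    fun j => (hxe j).mono fun ω hω => by dsimp only; rw [hω]
  have hsym' : ∀ j, Measure.map (x' j) μ = Measure.map (fun ω => -x' j ω) μ := fun j => by
    rw [← Measure.map_congr (hxe j), ← Measure.map_congr (hxneg j)]; exact hsym j
  have hM2' : ∀ j, ∫ ω, (x' j ω) ^ 2 ∂μ = v := fun j => by
    have he : (fun ω => x j ω ^ 2) =ᵐ[μ] fun ω => x' j ω ^ 2 := by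
      filter_upwards [hxe j] with ω hω
      rw [hω]
    rw [← integral_congr_ae he]; exact hM2 j
  -- the terms
  set G : Fin d → Ω → ℝ := fun j ω => max (x' j ω) 0 with hGdef
  set Y : Fin d → Ω → ℝ := fun j ω => W' j ω * max (x' j ω) 0 with hYdef
  have mrelu : Measurable fun t : ℝ => max t 0 := measurable_id.max measurable_const
  have hGm : ∀ j, Measurable (G j) := fun j => (hxm j).max measurable_const
  have hG2 : ∀ j, MemLp (G j) 2 μ := fun j =>
    (hx2 j).of_le (hGm j).aestronglyMeasurable
      (Filter.Eventually.of_forall fun ω => by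
        simp only [Real.norm_eq_abs]; exact abs_max_zero_le _)
  have hWxind : ∀ j, IndepFun (W' j) (x' j) μ := fun j =>
    hind'.indepFun (show (Sum.inl j : Fin d ⊕ Fin d) ≠ Sum.inr j by simp)
  have hWGind : ∀ j, IndepFun (W' j) (G j) μ := fun j =>
    (hWxind j).comp measurable_id mrelu
  have msq : Measurable fun t : ℝ => t ^ 2 := measurable_id.pow_const 2
  have hWGsqind : ∀ j, IndepFun (fun ω => W' j ω ^ 2) (fun ω => G j ω ^ 2) μ := fun j =>
    (hWGind j).comp msq msq
  have hYm : ∀ j, Measurable (Y j) := fun j => (hWm j).mul (hGm j)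
  have hYsqint : ∀ j, Integrable (fun ω => Y j ω ^ 2) μ := by
    intro j
    have heq : (fun ω => Y j ω ^ 2) = fun ω => W' j ω ^ 2 * G j ω ^ 2 := by
      funext ω; simp only [hYdef, hGdef]; ring
    rw [heq]
    exact (hWGsqind j).integrable_mul (hW2 j).integrable_sq (hG2 j).integrable_sq
  have hY2 : ∀ j, MemLp (Y j) 2 μ := fun j =>
    (memLp_two_iff_integrable_sq (hYm j).aestronglyMeasurable).2 (hYsqint j)
  have hEY : ∀ j, ∫ ω, Y j ω ∂μ = 0 := by
    intro j
    have := (hWGind j).integral_mul_eq_mul_integral ((hW2 j).integrable one_le_two).aestronglyMeasurable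
      ((hG2 j).integrable one_le_two).aestronglyMeasurable
    calc ∫ ω, Y j ω ∂μ = ∫ ω, (W' j * G j) ω ∂μ := rfl
      _ = (∫ ω, W' j ω ∂μ) * ∫ ω, G j ω ∂μ := this
      _ = 0 := by rw [hEW' j, zero_mul]
  -- E[G j ^ 2] = v / 2
  have hGsq : ∀ j, ∫ ω, G j ω ^ 2 ∂μ = v / 2 := by
    intro j
    have hGneg2 : MemLp (fun ω => max (-x' j ω) 0) 2 μ :=
      (hx2 j).neg.of_le ((hxm j).neg.max measurable_const).aestronglyMeasurable
        (Filter.Eventually.of_forall fun ω => by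
          simp only [Real.norm_eq_abs, Pi.neg_apply]
          calc |max (-x' j ω) 0| ≤ |(-x' j ω)| := abs_max_zero_le _
            _ = |(-(x' j)) ω| := rfl)
    have h1 : ∫ ω, G j ω ^ 2 ∂μ = ∫ ω, max (-x' j ω) 0 ^ 2 ∂μ := by
      have hm1 : AEStronglyMeasurable (fun t : ℝ => max t 0 ^ 2)
          (Measure.map (x' j) μ) := (msq.comp mrelu).aestronglyMeasurable
      have hm2 : AEStronglyMeasurable (fun t : ℝ => max t 0 ^ 2)
          (Measure.map (fun ω => -x' j ω) μ) := (msq.comp mrelu).aestronglyMeasurable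
      calc ∫ ω, G j ω ^ 2 ∂μ
          = ∫ t, max t 0 ^ 2 ∂(Measure.map (x' j) μ) :=
            (integral_map (hxm j).aemeasurable hm1).symm
        _ = ∫ t, max t 0 ^ 2 ∂(Measure.map (fun ω => -x' j ω) μ) := by rw [hsym' j]
        _ = ∫ ω, max (-x' j ω) 0 ^ 2 ∂μ :=
            integral_map (hxm j).neg.aemeasurable hm2
    have hint1 : Integrable (fun ω => G j ω ^ 2) μ := (hG2 j).integrable_sq
    have hint2 : Integrable (fun ω => max (-x' j ω) 0 ^ 2) μ := hGneg2.integrable_sq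
    have hsum : (∫ ω, G j ω ^ 2 ∂μ) + ∫ ω, max (-x' j ω) 0 ^ 2 ∂μ = v := by
      rw [← integral_add hint1 hint2]
      calc ∫ ω, (G j ω ^ 2 + max (-x' j ω) 0 ^ 2) ∂μ
          = ∫ ω, (x' j ω) ^ 2 ∂μ :=
            integral_congr_ae (Filter.Eventually.of_forall fun ω =>
              relu_sq_add_relu_neg_sq (x' j ω))
        _ = v := hM2' j
    linarith [h1, hsum]
  -- variance of each term
  have hEWsq : ∀ j, ∫ ω, W' j ω ^ 2 ∂μ = σ2 := by
    intro j
    have := variance_eq_sub (hW2 j)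
    rw [hVW' j, hEW' j] at this
    simp only [Pi.pow_apply] at this
    linarith [this]
  have hVarY : ∀ j, variance (Y j) μ = σ2 * (v / 2) := by
    intro j
    rw [variance_eq_sub (hY2 j)]
    have hsq : ∫ ω, (Y j ^ 2) ω ∂μ = σ2 * (v / 2) := by
      have heq : (Y j ^ 2) = (fun ω => W' j ω ^ 2) * fun ω => G j ω ^ 2 := by
        funext ω; simp only [Pi.pow_apply, Pi.mul_apply, hYdef, hGdef]; ring
      rw [heq, (hWGsqind j).integral_mul_eq_mul_integral (hW2 j).integrable_sq.aestronglyMeasurable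
        (hG2 j).integrable_sq.aestronglyMeasurable, hEWsq j, hGsq j]
    rw [hsq, hEY j]
    ring
  -- pairwise independence
  have hpair : ∀ i j : Fin d, i ≠ j → IndepFun (Y i) (Y j) μ := by
    intro i j hij
    have hmeas : ∀ k : Fin d ⊕ Fin d, Measurable (Sum.elim W' x' k) := by
      intro k
      cases k with
      | inl a => exact hWm a
      | inr a => exact hxm a
    have h4 := hind'.indepFun_prodMk_prodMk hmeas (Sum.inl i) (Sum.inr i)
      (Sum.inl j) (Sum.inr j) (by simp [hij]) (by simp) (by simp) (by simp [hij])
    have hφ : Measurable fun p : ℝ × ℝ => p.1 * max p.2 0 :=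
      measurable_fst.mul (measurable_snd.max measurable_const)
    exact h4.comp hφ hφ
  -- put it together
  have hfin : (fun ω => ∑ j, W' j ω * max (x' j ω) 0) = ∑ j, Y j := by
    funext ω; simp [hYdef]
  have hae : (fun ω => ∑ j, W j ω * max (x j ω) 0) =ᵐ[μ]
      fun ω => ∑ j, W' j ω * max (x' j ω) 0 := by
    have : ∀ᵐ ω ∂μ, ∀ j, W j ω = W' j ω ∧ x j ω = x' j ω :=
      ae_all_iff.2 fun j => (hWe j).and (hxe j)
    filter_upwards [this] with ω hω
    exact Finset.sum_congr rfl fun j _ => by rw [(hω j).1, (hω j).2]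
  rw [variance_congr_ae' hae, hfin,
    IndepFun.variance_sum (fun j _ => hY2 j)
      (fun i _ j _ hij => hpair i j hij)]
  simp only [hVarY, Finset.sum_const, Finset.card_univ, Fintype.card_fin, nsmul_eq_mul]
  ring
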